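/- Let D be a deck and k an even integer such that no graph in D contains an even cycle of length at most k. Then there exists a nonzero kernel U such that c^D_{U,2} = c^D_{U,4} = ⋯ = c^D_{U,k} = 0. -/

import Mathlib

open MeasureTheory

/-- A kernel: a bounded measurable symmetric real function (its values on `[0,1]²` are the
relevant ones). -/
structure Kernel : Type where
  toFun : ℝ → ℝ → ℝ
  symm : ∀ x y, toFun x y = toFun y x
  measurable : Measurable (Function.uncurry toFun)
  bounded : ∃ C : ℝ, ∀ x y, |toFun x y| ≤ C

/-- A kernel is nonzero if it is not a.e. zero on `[0,1]²`. -/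
def Kernel.Nonzero (U : Kernel) : Prop :=
  ¬ (∀ᵐ p : ℝ × ℝ ∂(volume.restrict ((Set.Icc (0:ℝ) 1) ×ˢ (Set.Icc (0:ℝ) 1))),
      U.toFun p.1 p.2 = 0)

/-- A kernel is balanced if its marginals vanish a.e. -/
def Kernel.Balanced (U : Kernel) : Prop :=
  ∀ᵐ x ∂(volume.restrict (Set.Icc (0:ℝ) 1)), (∫ y in Set.Icc (0:ℝ) 1, U.toFun x y) = 0

/-- The product of the kernel values over the edges of a graph. -/
noncomputable def edgeProd {V : Type} (H : SimpleGraph V) (U : Kernel) (x : V → ℝ) : ℝ :=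
  ∏ᶠ e ∈ H.edgeSet, Sym2.lift ⟨fun u v => U.toFun (x u) (x v), fun u v => U.symm (x u) (x v)⟩ e

/-- The homomorphism density `t(H, U)` of a finite simple graph in a kernel. -/
noncomputable def homDensity {V : Type} [Fintype V] (H : SimpleGraph V) (U : Kernel) : ℝ :=
  ∫ x in (Set.univ.pi fun _ : V => Set.Icc (0:ℝ) 1), edgeProd H U x

open Classical in
/-- The rooted homomorphism density `t^H_U(z)` of a graph `H` rooted at `w`. -/
noncomputable def rootedDensity {V : Type} [Fintype V] (H : SimpleGraph V) (w : V)
    (U : Kernel) (z : ℝ) : ℝ :=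
  ∫ x in (Set.univ.pi fun _ : {v : V // v ≠ w} => Set.Icc (0:ℝ) 1),
    edgeProd H U (fun v => if h : v = w then z else x ⟨v, h⟩)

/-- A bundled finite simple graph. -/
structure FinGraph : Type 1 where
  V : Type
  fintypeV : Fintype V
  G : SimpleGraph V

attribute [instance] FinGraph.fintypeV

def FinGraph.of {V : Type} [h : Fintype V] (G : SimpleGraph V) : FinGraph := ⟨V, h, G⟩

noncomputable def FinGraph.density (G : FinGraph) (U : Kernel) : ℝ := homDensity G.G U

/-- Number of edges of a bundled finite graph. -/
noncomputable def FinGraph.edges (G : FinGraph) : ℕ := G.G.edgeSet.ncard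

instance finiteSubgraph {V : Type} [Finite V] (G : SimpleGraph V) : Finite G.Subgraph := by
  classical
  exact Finite.of_injective (fun G' => (G'.verts, G'.Adj))
    (fun a b h => SimpleGraph.Subgraph.ext (congrArg Prod.fst h) (congrArg Prod.snd h))

open Classical in
/-- The multiset of all subgraphs of `G` having exactly `l` edges. -/
noncomputable def FinGraph.subs (G : FinGraph) (l : ℕ) : Multiset FinGraph :=
  ((Set.toFinite {G' : G.G.Subgraph | G'.edgeSet.ncard = l}).toFinset.val).map
    fun G' => FinGraph.of G'.coe

/-- `D` is an `l`-deck: a multiset of graphs each with exactly `l` edges. -/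
def IsDeck (D : Multiset FinGraph) (l : ℕ) : Prop := ∀ G ∈ D, G.edges = l

/-- The `l`-deck of a deck `D`: all `l`-edge subgraphs of the graphs of `D`. -/
noncomputable def subDeck (D : Multiset FinGraph) (l : ℕ) : Multiset FinGraph :=
  D.bind fun G => G.subs l

/-- `s_D(H)`: the number of subgraphs isomorphic to `H` of the graphs in `D`. -/
noncomputable def sD (D : Multiset FinGraph) (H : FinGraph) : ℕ :=
  (D.map fun G => Set.ncard {G' : G.G.Subgraph | Nonempty (G'.coe ≃g H.G)}).sum

/-- The coefficient `c^D_{U,l} = Σ_{G ∈ D} Σ_{H' ∈ G[l]} t(H', U)`. -/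
noncomputable def coeff (D : Multiset FinGraph) (U : Kernel) (l : ℕ) : ℝ :=
  ((subDeck D l).map fun H => H.density U).sum

/-- All the coefficients `c^D_{U,2}, c^D_{U,4}, …, c^D_{U,l}` vanish. -/
def AllCoeffZero (D : Multiset FinGraph) (U : Kernel) (l : ℕ) : Prop :=
  ∀ k, Even k → 0 < k → k ≤ l → coeff D U k = 0

/-- Among `c^D_{U,2}, c^D_{U,4}, …, c^D_{U,l}` not all vanish and the first nonzero one
is positive. -/
def FirstNonzeroPos (D : Multiset FinGraph) (U : Kernel) (l : ℕ) : Prop :=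
  ∃ k, Even k ∧ 0 < k ∧ k ≤ l ∧ 0 < coeff D U k ∧
    ∀ j, Even j → 0 < j → j < k → coeff D U j = 0

/-- Among `c^D_{U,2}, c^D_{U,4}, …, c^D_{U,l}` not all vanish and the first nonzero one
is negative. -/
def FirstNonzeroNeg (D : Multiset FinGraph) (U : Kernel) (l : ℕ) : Prop :=
  ∃ k, Even k ∧ 0 < k ∧ k ≤ l ∧ coeff D U k < 0 ∧
    ∀ j, Even j → 0 < j → j < k → coeff D U j = 0

def ClassI (D : Multiset FinGraph) (l : ℕ) : Prop :=
  ∀ U : Kernel, U.Nonzero → FirstNonzeroPos D U l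

def ClassII (D : Multiset FinGraph) (l : ℕ) : Prop :=
  ∃ U : Kernel, FirstNonzeroNeg D U l

def ClassIII (D : Multiset FinGraph) (l : ℕ) : Prop :=
  (∃ U : Kernel, U.Nonzero ∧ AllCoeffZero D U l) ∧
  ∀ U : Kernel, AllCoeffZero D U l ∨ FirstNonzeroPos D U l

/-- The cycle `C_n` as a bundled graph. -/
def cycleF (n : ℕ) : FinGraph := FinGraph.of (SimpleGraph.cycleGraph n)

/-- The path `P_n` with `n` edges as a bundled graph. -/
def pathF (n : ℕ) : FinGraph := FinGraph.of (SimpleGraph.pathGraph (n+1))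

/-- Gluing two graphs by identifying the vertex `v` of `G` with the vertex `w` of `H`. -/
def glue {V W : Type} (G : SimpleGraph V) (H : SimpleGraph W) (v : V) (w : W) :
    SimpleGraph (V ⊕ {x : W // x ≠ w}) where
  Adj a b :=
    Sum.elim (fun a => Sum.elim (fun b => G.Adj a b) (fun b => a = v ∧ H.Adj w b.1) b)
             (fun a => Sum.elim (fun b => b = v ∧ H.Adj w a.1) (fun b => H.Adj a.1 b.1) b) a
  symm := ⟨by
    rintro (a | a) (b | b) h
    · exact G.adj_symm h
    · exact h
    · exact h
    · exact H.adj_symm h⟩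
  loopless := ⟨by
    rintro (a | a) h
    · exact G.irrefl h
    · exact H.irrefl h⟩

/-- Disjoint union of two simple graphs. -/
def disjSum {V W : Type} (G : SimpleGraph V) (H : SimpleGraph W) : SimpleGraph (V ⊕ W) where
  Adj a b :=
    Sum.elim (fun a => Sum.elim (fun b => G.Adj a b) (fun _ => False) b)
             (fun a => Sum.elim (fun _ => False) (fun b => H.Adj a b) b) a
  symm := ⟨by
    rintro (a | a) (b | b) h
    · exact G.adj_symm h
    · exact h.elim
    · exact h.elim
    · exact H.adj_symm h⟩
  loopless := ⟨by
    rintro (a | a) h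
    · exact G.irrefl h
    · exact H.irrefl h⟩

/-- Disjoint union `G ∪ H` of bundled graphs. -/
noncomputable def FinGraph.disjU (G H : FinGraph) : FinGraph := FinGraph.of (disjSum G.G H.G)

open Classical in
/-- `C_k ⊕ P_n ⊕ C_l`: two cycles joined by a path with `n` edges; for `n = 0` this is
`C_k ⊕ C_l`, two cycles sharing one vertex. (Junk value if `k = 0` or `l = 0`.) -/
noncomputable def cpcF (k n l : ℕ) : FinGraph :=
  if h : 0 < k ∧ 0 < l then
    let A := glue (SimpleGraph.cycleGraph k) (SimpleGraph.pathGraph (n+1)) ⟨0, h.1⟩ 0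
    let ep : Fin k ⊕ {x : Fin (n+1) // x ≠ 0} :=
      if hn : n = 0 then Sum.inl ⟨0, h.1⟩
      else Sum.inr ⟨Fin.last n, fun hc => hn (by simpa using congrArg Fin.val hc)⟩
    FinGraph.of (glue A (SimpleGraph.cycleGraph l) ep ⟨0, h.2⟩)
  else FinGraph.of (⊥ : SimpleGraph (Fin 0))


noncomputable def aF : ℝ → ℝ :=
  (Set.Ico (0:ℝ) (1/4)).indicator (fun _ => 1) - (Set.Ico (1/4:ℝ) (1/2)).indicator (fun _ => 1)

noncomputable def bF : ℝ → ℝ :=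
  (Set.Ico (1/2:ℝ) (3/4)).indicator (fun _ => 1) - (Set.Ico (3/4:ℝ) 1).indicator (fun _ => 1)

lemma measurable_aF : Measurable aF :=
  ((measurable_const.indicator measurableSet_Ico).sub
    (measurable_const.indicator measurableSet_Ico))

lemma measurable_bF : Measurable bF :=
  ((measurable_const.indicator measurableSet_Ico).sub
    (measurable_const.indicator measurableSet_Ico))

lemma aF_abs_le (x : ℝ) : |aF x| ≤ 1 := by
  simp only [aF, Pi.sub_apply, Set.indicator_apply]
  split_ifs with h1 h2 h2 <;> simp_all [Set.mem_Ico] <;> norm_num <;> linarith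

lemma bF_abs_le (x : ℝ) : |bF x| ≤ 1 := by
  simp only [bF, Pi.sub_apply, Set.indicator_apply]
  split_ifs with h1 h2 h2 <;> simp_all [Set.mem_Ico] <;> norm_num <;> linarith

lemma aF_mul_bF (x : ℝ) : aF x * bF x = 0 := by
  rcases lt_or_ge x (1/2) with h | h
  · have hb : bF x = 0 := by
      simp only [bF, Pi.sub_apply]
      rw [Set.indicator_of_notMem, Set.indicator_of_notMem] <;>
        simp [Set.mem_Ico] <;> intro h' <;> linarith
    rw [hb, mul_zero]
  · have ha : aF x = 0 := by
      simp only [aF, Pi.sub_apply]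
      rw [Set.indicator_of_notMem, Set.indicator_of_notMem] <;>
        simp [Set.mem_Ico] <;> intro h' <;> linarith
    rw [ha, zero_mul]

lemma integral_ind (c d : ℝ) (h0 : 0 ≤ c) (hcd : c ≤ d) (h1 : d ≤ 1) :
    ∫ x in Set.Icc (0:ℝ) 1, (Set.Ico c d).indicator (fun _ => (1:ℝ)) x = d - c := by
  rw [integral_indicator_const _ measurableSet_Ico]
  rw [Measure.real_def, Measure.restrict_apply measurableSet_Ico]
  have : Set.Ico c d ∩ Set.Icc 0 1 = Set.Ico c d := by
    apply Set.inter_eq_self_of_subset_left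
    intro x hx
    simp only [Set.mem_Ico, Set.mem_Icc] at *
    constructor <;> linarith [hx.1, hx.2]
  rw [this, Real.volume_Ico, ENNReal.toReal_ofReal (by linarith), smul_eq_mul, mul_one]

lemma integrableOn_ind (c d : ℝ) :
    IntegrableOn ((Set.Ico c d).indicator (fun _ => (1:ℝ))) (Set.Icc (0:ℝ) 1) := by
  apply Integrable.indicator _ measurableSet_Ico
  exact integrableOn_const (by simp [Real.volume_Icc])

lemma integral_aF : ∫ x in Set.Icc (0:ℝ) 1, aF x = 0 := by
  unfold aF
  rw [show ((Set.Ico (0:ℝ) (1/4)).indicator (fun _ => (1:ℝ)) -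
      (Set.Ico (1/4:ℝ) (1/2)).indicator (fun _ => 1)) = fun x =>
      ((Set.Ico (0:ℝ) (1/4)).indicator (fun _ => (1:ℝ)) x -
      (Set.Ico (1/4:ℝ) (1/2)).indicator (fun _ => 1) x) from rfl]
  rw [integral_sub (integrableOn_ind _ _) (integrableOn_ind _ _)]
  rw [integral_ind _ _ (by norm_num) (by norm_num) (by norm_num),
    integral_ind _ _ (by norm_num) (by norm_num) (by norm_num)]
  norm_num

lemma integral_bF : ∫ x in Set.Icc (0:ℝ) 1, bF x = 0 := by
  unfold bF
  rw [show ((Set.Ico (1/2:ℝ) (3/4)).indicator (fun _ => (1:ℝ)) -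
      (Set.Ico (3/4:ℝ) 1).indicator (fun _ => 1)) = fun x =>
      ((Set.Ico (1/2:ℝ) (3/4)).indicator (fun _ => (1:ℝ)) x -
      (Set.Ico (3/4:ℝ) 1).indicator (fun _ => 1) x) from rfl]
  rw [integral_sub (integrableOn_ind _ _) (integrableOn_ind _ _)]
  rw [integral_ind _ _ (by norm_num) (by norm_num) (by norm_num),
    integral_ind _ _ (by norm_num) (by norm_num) (by norm_num)]
  norm_num


noncomputable def myU : Kernel where
  toFun x y := aF x * bF y + bF x * aF y
  symm x y := by ring
  measurable := by
    exact ((measurable_aF.comp measurable_fst).mul (measurable_bF.comp measurable_snd)).add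
      ((measurable_bF.comp measurable_fst).mul (measurable_aF.comp measurable_snd))
  bounded := ⟨2, fun x y => by
    calc |aF x * bF y + bF x * aF y| ≤ |aF x * bF y| + |bF x * aF y| := abs_add_le _ _
    _ = |aF x| * |bF y| + |bF x| * |aF y| := by rw [abs_mul, abs_mul]
    _ ≤ 1 * 1 + 1 * 1 := by gcongr <;>
        first | exact aF_abs_le _ | exact bF_abs_le _ | exact abs_nonneg _
    _ = 2 := by norm_num⟩

lemma myU_nonzero : myU.Nonzero := by
  intro hae
  set S := (Set.Icc (0:ℝ) 1) ×ˢ (Set.Icc (0:ℝ) 1) with hS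
  set T := (Set.Ico (0:ℝ) (1/4)) ×ˢ (Set.Ico (1/2:ℝ) (3/4)) with hT
  have hTmeas : MeasurableSet T := measurableSet_Ico.prod measurableSet_Ico
  have hTsub : T ⊆ S := by
    rintro ⟨x, y⟩ ⟨hx, hy⟩
    simp only [Set.mem_Ico] at hx hy
    exact ⟨Set.mem_Icc.2 ⟨hx.1, by linarith [hx.2]⟩,
      Set.mem_Icc.2 ⟨by linarith [hy.1], by linarith [hy.2]⟩⟩
  have haF_one : ∀ x ∈ Set.Ico (0:ℝ) (1/4), aF x = 1 := by
    intro x hx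
    have hx' := Set.mem_Ico.1 hx
    simp only [aF, Pi.sub_apply]
    rw [Set.indicator_of_mem hx, Set.indicator_of_notMem (by
      simp only [Set.mem_Ico, not_and, not_lt]; intro h; linarith [hx'.2])]
    norm_num
  have hbF_one : ∀ y ∈ Set.Ico (1/2:ℝ) (3/4), bF y = 1 := by
    intro y hy
    have hy' := Set.mem_Ico.1 hy
    simp only [bF, Pi.sub_apply]
    rw [Set.indicator_of_mem hy, Set.indicator_of_notMem (by
      simp only [Set.mem_Ico, not_and, not_lt]; intro h; linarith [hy'.2])]
    norm_num
  have hbF_zero : ∀ x : ℝ, x < 1/2 → bF x = 0 := by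
    intro x hx
    simp only [bF, Pi.sub_apply]
    rw [Set.indicator_of_notMem (by
        simp only [Set.mem_Ico, not_and, not_le]; intro h; linarith),
      Set.indicator_of_notMem (by
        simp only [Set.mem_Ico, not_and, not_le]; intro h; linarith)]
    norm_num
  have haF_zero : ∀ y : ℝ, 1/2 ≤ y → aF y = 0 := by
    intro y hy
    simp only [aF, Pi.sub_apply]
    rw [Set.indicator_of_notMem (by
        simp only [Set.mem_Ico, not_and, not_lt]; intro h; linarith),
      Set.indicator_of_notMem (by
        simp only [Set.mem_Ico, not_and, not_lt]; intro h; linarith)]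
    norm_num
  have hT1 : ∀ p ∈ T, myU.toFun p.1 p.2 = 1 := by
    rintro ⟨x, y⟩ ⟨hx, hy⟩
    show aF x * bF y + bF x * aF y = 1
    rw [haF_one x hx, hbF_one y hy, hbF_zero x (by linarith [(Set.mem_Ico.1 hx).2]),
      haF_zero y (Set.mem_Ico.1 hy).1]
    ring
  have h0 : (volume.restrict S) {p : ℝ × ℝ | myU.toFun p.1 p.2 ≠ 0} = 0 := hae
  have hle : (volume.restrict S) T ≤
      (volume.restrict S) {p : ℝ × ℝ | myU.toFun p.1 p.2 ≠ 0} := by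
    apply measure_mono
    intro p hp
    simp only [Set.mem_setOf_eq, hT1 p hp]
    norm_num
  have hTS : (volume.restrict S) T = volume T := by
    rw [Measure.restrict_apply hTmeas, Set.inter_eq_self_of_subset_left hTsub]
  have hTpos : (0:ENNReal) < volume T := by
    rw [hT, show (volume : Measure (ℝ × ℝ)) = (volume : Measure ℝ).prod volume from rfl,
      Measure.prod_prod, Real.volume_Ico, Real.volume_Ico]
    rw [← ENNReal.ofReal_mul (by norm_num)]
    apply ENNReal.ofReal_pos.2
    norm_num
  rw [hTS, h0] at hle
  exact absurd (le_antisymm hle zero_le) (ne_of_gt hTpos)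


section Density
variable {V : Type} [Fintype V]

noncomputable def EF (K : SimpleGraph V) : Finset (Sym2 V) := K.edgeSet.toFinite.toFinset

noncomputable def ue (e : Sym2 V) : V := (Quot.out e).1
noncomputable def we (e : Sym2 V) : V := (Quot.out e).2

lemma mk_ue_we (e : Sym2 V) : s(ue e, we e) = e := by
  show Sym2.mk (Quot.out e).1 (Quot.out e).2 = e
  rw [Sym2.mk, Prod.mk.eta, Quot.out_eq]

lemma mem_EF {K : SimpleGraph V} {e : Sym2 V} (he : e ∈ EF K) : e ∈ K.edgeSet :=
  (Set.Finite.mem_toFinset _).mp he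

lemma mem_EF' {K : SimpleGraph V} {e : Sym2 V} (he : e ∈ K.edgeSet) : e ∈ EF K :=
  (Set.Finite.mem_toFinset _).mpr he

lemma adj_ue_we {K : SimpleGraph V} {e : Sym2 V} (he : e ∈ EF K) : K.Adj (ue e) (we e) := by
  rw [← SimpleGraph.mem_edgeSet, mk_ue_we]
  exact mem_EF he

lemma ue_ne_we {K : SimpleGraph V} {e : Sym2 V} (he : e ∈ EF K) : ue e ≠ we e :=
  (adj_ue_we he).ne

open Classical in
noncomputable def Fv (K : SimpleGraph V) (T : Finset (Sym2 V)) (v : V) (t : ℝ) : ℝ :=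
  ∏ e ∈ EF K, ((if ue e = v then (if e ∈ T then aF t else bF t) else 1) *
    (if we e = v then (if e ∈ T then bF t else aF t) else 1))

open Classical in
noncomputable def alC (K : SimpleGraph V) (T : Finset (Sym2 V)) (v : V) : ℕ :=
  ((EF K).filter fun e => (ue e = v ∧ e ∈ T) ∨ (we e = v ∧ e ∉ T)).card

open Classical in
noncomputable def beC (K : SimpleGraph V) (T : Finset (Sym2 V)) (v : V) : ℕ :=
  ((EF K).filter fun e => (ue e = v ∧ e ∉ T) ∨ (we e = v ∧ e ∈ T)).card

open Classical in
noncomputable def incC (K : SimpleGraph V) (v : V) : Finset (Sym2 V) :=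
  (EF K).filter fun e => ue e = v ∨ we e = v

open Classical in
lemma Fv_eq_pow (K : SimpleGraph V) (T : Finset (Sym2 V)) (v : V) (t : ℝ) :
    Fv K T v t = aF t ^ alC K T v * bF t ^ beC K T v := by
  classical
  unfold Fv alC beC
  rw [Finset.prod_congr rfl (g := fun e =>
      if (ue e = v ∧ e ∈ T) ∨ (we e = v ∧ e ∉ T) then aF t
      else if (ue e = v ∧ e ∉ T) ∨ (we e = v ∧ e ∈ T) then bF t else 1) ?_]
  · rw [Finset.prod_ite]
    rw [Finset.prod_const, Finset.prod_ite, Finset.prod_const, Finset.prod_const, one_pow,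
      mul_one, Finset.filter_filter]
    have hcongr : (Finset.filter (fun a =>
        ¬(ue a = v ∧ a ∈ T ∨ we a = v ∧ a ∉ T) ∧ (ue a = v ∧ a ∉ T ∨ we a = v ∧ a ∈ T))
          (EF K)) = Finset.filter (fun e => ue e = v ∧ e ∉ T ∨ we e = v ∧ e ∈ T) (EF K) := by
      apply Finset.filter_congr
      intro e he
      have hne := ue_ne_we (K := K) he
      constructor
      · exact fun h => h.2
      · intro h
        refine ⟨?_, h⟩
        rcases h with ⟨h1, h2⟩ | ⟨h1, h2⟩ <;> intro hcon <;>
          rcases hcon with ⟨h3, h4⟩ | ⟨h3, h4⟩ <;>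
          first
          | exact h2 h4
          | exact h4 h2
          | exact hne (h1.trans h3.symm)
          | exact hne (h3.trans h1.symm)
    rw [hcongr]
  · intro e he
    have hne := ue_ne_we (K := K) he
    by_cases h1 : ue e = v <;> by_cases h2 : we e = v <;> by_cases h3 : e ∈ T <;>
      simp [h1, h2, h3] <;> exact absurd (h1.trans h2.symm) hne

lemma al_add_be (K : SimpleGraph V) (T : Finset (Sym2 V)) (v : V) :
    alC K T v + beC K T v = (incC K v).card := by
  classical
  unfold alC beC incC
  rw [← Finset.card_union_of_disjoint]
  · rw [← Finset.filter_or]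
    congr 1
    apply Finset.filter_congr
    intro e he
    by_cases hT : e ∈ T <;> tauto
  · rw [Finset.disjoint_left]
    intro e he1 he2
    rw [Finset.mem_filter] at he1 he2
    have hne := ue_ne_we (K := K) he1.1
    rcases he1.2 with ⟨h1, h2⟩ | ⟨h1, h2⟩ <;> rcases he2.2 with ⟨h3, h4⟩ | ⟨h3, h4⟩ <;>
      first
      | exact h2 h4
      | exact h4 h2
      | exact hne (h1.trans h3.symm)
      | exact hne (h3.trans h1.symm)

lemma measurable_Fv (K : SimpleGraph V) (T : Finset (Sym2 V)) (v : V) :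
    Measurable (Fv K T v) := by
  apply Finset.measurable_prod
  intro e _
  apply Measurable.mul <;> split_ifs <;>
    first | exact measurable_aF | exact measurable_bF | exact measurable_const

lemma abs_Fv_le (K : SimpleGraph V) (T : Finset (Sym2 V)) (v : V) (t : ℝ) :
    |Fv K T v t| ≤ 1 := by
  classical
  unfold Fv
  rw [Finset.abs_prod]
  apply Finset.prod_le_one
  · intro e _; exact abs_nonneg _
  · intro e _
    rw [abs_mul]
    have h1 : |if ue e = v then (if e ∈ T then aF t else bF t) else 1| ≤ 1 := by
      split_ifs <;> first | exact aF_abs_le t | exact bF_abs_le t | simp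
    have h2 : |if we e = v then (if e ∈ T then bF t else aF t) else 1| ≤ 1 := by
      split_ifs <;> first | exact aF_abs_le t | exact bF_abs_le t | simp
    calc |if ue e = v then (if e ∈ T then aF t else bF t) else 1| *
        |if we e = v then (if e ∈ T then bF t else aF t) else 1| ≤ 1 * 1 :=
      mul_le_mul h1 h2 (abs_nonneg _) (by norm_num)
    _ = 1 := by norm_num

open Classical in
lemma edgeProd_expand (K : SimpleGraph V) (x : V → ℝ) :
    edgeProd K myU x = ∑ T ∈ (EF K).powerset, ∏ v : V, Fv K T v (x v) := by
  classical
  unfold edgeProd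
  have hset : K.edgeSet = ↑(EF K) := (Set.Finite.coe_toFinset _).symm
  rw [hset, finprod_mem_coe_finset]
  have step1 : ∀ e ∈ EF K,
      Sym2.lift ⟨fun u v => myU.toFun (x u) (x v), fun u v => myU.symm (x u) (x v)⟩ e
        = aF (x (ue e)) * bF (x (we e)) + bF (x (ue e)) * aF (x (we e)) := by
    intro e _
    conv_lhs => rw [← mk_ue_we e]
    rfl
  rw [Finset.prod_congr rfl step1, Finset.prod_add]
  apply Finset.sum_congr rfl
  intro T hT
  rw [Finset.mem_powerset] at hT
  have step2 : ((∏ e ∈ T, aF (x (ue e)) * bF (x (we e))) *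
      ∏ e ∈ EF K \ T, bF (x (ue e)) * aF (x (we e))) =
      ∏ e ∈ EF K, ((if e ∈ T then aF (x (ue e)) * bF (x (we e))
        else bF (x (ue e)) * aF (x (we e)))) := by
    rw [Finset.prod_ite]
    congr 1
    · apply Finset.prod_congr _ (fun _ _ => rfl)
      rw [Finset.filter_mem_eq_inter, Finset.inter_eq_right.mpr hT]
    · apply Finset.prod_congr _ (fun _ _ => rfl)
      rw [Finset.sdiff_eq_filter]
  rw [step2]
  -- regroup over vertices
  have step3 : ∀ T' : Finset (Sym2 V), ∏ v : V, Fv K T' v (x v) =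
      ∏ e ∈ EF K, ((if e ∈ T' then aF (x (ue e)) * bF (x (we e))
        else bF (x (ue e)) * aF (x (we e)))) := by
    intro T'
    unfold Fv
    rw [Finset.prod_comm]
    apply Finset.prod_congr rfl
    intro e _
    rw [Finset.prod_mul_distrib, Finset.prod_ite_eq, Finset.prod_ite_eq]
    simp only [Finset.mem_univ, if_true]
    split_ifs <;> ring
  rw [step3 T]

end Density

section Density2
variable {V : Type} [Fintype V]

lemma volume_S : (volume (Set.univ.pi fun _ : V => Set.Icc (0:ℝ) 1)) = 1 := by
  rw [volume_pi_pi]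
  simp

lemma homDensity_eq (K : SimpleGraph V) :
    homDensity K myU = ∑ T ∈ (EF K).powerset, ∏ v : V, ∫ t in Set.Icc (0:ℝ) 1, Fv K T v t := by
  classical
  unfold homDensity
  have hS : MeasurableSet (Set.univ.pi fun _ : V => Set.Icc (0:ℝ) 1) :=
    MeasurableSet.univ_pi fun _ => measurableSet_Icc
  haveI : IsFiniteMeasure (volume.restrict (Set.univ.pi fun _ : V => Set.Icc (0:ℝ) 1)) := by
    constructor
    rw [Measure.restrict_apply_univ, volume_S]
    exact ENNReal.one_lt_top
  simp only [edgeProd_expand]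
  rw [integral_finset_sum]
  · apply Finset.sum_congr rfl
    intro T _
    rw [← integral_indicator hS]
    have hind : ((Set.univ.pi fun _ : V => Set.Icc (0:ℝ) 1).indicator
        fun x => ∏ v : V, Fv K T v (x v)) =
        fun x => ∏ v : V, ((Set.Icc (0:ℝ) 1).indicator (Fv K T v)) (x v) := by
      funext x
      by_cases hx : x ∈ (Set.univ.pi fun _ : V => Set.Icc (0:ℝ) 1)
      · rw [Set.indicator_of_mem hx]
        apply Finset.prod_congr rfl
        intro v _
        rw [Set.indicator_of_mem (hx v (Set.mem_univ v))]
      · rw [Set.indicator_of_notMem hx]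
        rw [Set.mem_univ_pi] at hx
        push_neg at hx
        obtain ⟨v0, hv0⟩ := hx
        exact (Finset.prod_eq_zero (Finset.mem_univ v0)
          (Set.indicator_of_notMem hv0 _)).symm
    rw [hind, MeasureTheory.integral_fintype_prod_volume_eq_prod (ι := V)
      (fun v => (Set.Icc (0:ℝ) 1).indicator (Fv K T v))]
    apply Finset.prod_congr rfl
    intro v _
    rw [integral_indicator measurableSet_Icc]
  · intro T _
    have hmeas : Measurable fun x : V → ℝ => ∏ v : V, Fv K T v (x v) :=
      Finset.measurable_prod _ fun v _ => (measurable_Fv K T v).comp (measurable_pi_apply v)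
    apply (integrable_const (1:ℝ)).mono' hmeas.aestronglyMeasurable
    apply Filter.Eventually.of_forall
    intro x
    rw [Real.norm_eq_abs, Finset.abs_prod]
    apply Finset.prod_le_one
    · intro v _; exact abs_nonneg _
    · intro v _; exact abs_Fv_le K T v (x v)

lemma homDensity_zero (K : SimpleGraph V) (hne : K.edgeSet.Nonempty)
    (HYP : ∀ c : V → Bool, (∀ x y, K.Adj x y → c x ≠ c y) →
      (∀ v p, K.Adj v p → ∃ q, q ≠ p ∧ K.Adj v q) → False) :
    homDensity K myU = 0 := by
  classical
  rw [homDensity_eq]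
  apply Finset.sum_eq_zero
  intro T hT
  -- helper: vanishing single-letter integrals
  have hzero : ∀ v : V, (alC K T v = 1 ∧ beC K T v = 0) ∨ (alC K T v = 0 ∧ beC K T v = 1) ∨
      (1 ≤ alC K T v ∧ 1 ≤ beC K T v) → (∫ t in Set.Icc (0:ℝ) 1, Fv K T v t) = 0 := by
    intro v hv
    rcases hv with ⟨h1, h2⟩ | ⟨h1, h2⟩ | ⟨h1, h2⟩
    · have : ∀ t, Fv K T v t = aF t := by
        intro t; rw [Fv_eq_pow, h1, h2]; ring
      simp only [this]
      exact integral_aF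
    · have : ∀ t, Fv K T v t = bF t := by
        intro t; rw [Fv_eq_pow, h1, h2]; ring
      simp only [this]
      exact integral_bF
    · have : ∀ t, Fv K T v t = 0 := by
        intro t
        rw [Fv_eq_pow]
        rcases mul_eq_zero.mp (aF_mul_bF t) with h | h
        · rw [h, zero_pow (by omega), zero_mul]
        · rw [h, zero_pow (by omega), mul_zero]
      simp only [this]
      exact integral_zero _ _
  by_cases hA : ∃ v, (incC K v).card = 1
  · obtain ⟨v, hv⟩ := hA
    apply Finset.prod_eq_zero (Finset.mem_univ v)
    apply hzero
    have := al_add_be K T v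
    rcases Nat.eq_zero_or_pos (alC K T v) with h | h
    · right; left; omega
    · left; omega
  · push_neg at hA
    by_cases hmix : ∃ v, 1 ≤ alC K T v ∧ 1 ≤ beC K T v
    · obtain ⟨v, hv⟩ := hmix
      exact Finset.prod_eq_zero (Finset.mem_univ v) (hzero v (Or.inr (Or.inr hv)))
    · push_neg at hmix
      exfalso
      -- build the 2-coloring
      set c : V → Bool := fun v => decide (0 < alC K T v) with hc
      -- membership facts
      have hmemEF : ∀ {x y : V}, K.Adj x y → s(x,y) ∈ EF K := by
        intro x y hxy
        exact mem_EF' hxy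
      have hendpts : ∀ {x y : V}, K.Adj x y →
          (ue s(x,y) = x ∧ we s(x,y) = y) ∨ (ue s(x,y) = y ∧ we s(x,y) = x) := by
        intro x y _
        have h := mk_ue_we (s(x,y))
        rw [Sym2.eq_iff] at h
        rcases h with h | h
        · exact Or.inl h
        · exact Or.inr h
      have hal_pos : ∀ {v : V} {e : Sym2 V}, e ∈ EF K →
          ((ue e = v ∧ e ∈ T) ∨ (we e = v ∧ e ∉ T)) → 0 < alC K T v := by
        intro v e he hPa
        apply Finset.card_pos.mpr
        exact ⟨e, Finset.mem_filter.mpr ⟨he, hPa⟩⟩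
      have hbe_pos : ∀ {v : V} {e : Sym2 V}, e ∈ EF K →
          ((ue e = v ∧ e ∉ T) ∨ (we e = v ∧ e ∈ T)) → 0 < beC K T v := by
        intro v e he hPb
        apply Finset.card_pos.mpr
        exact ⟨e, Finset.mem_filter.mpr ⟨he, hPb⟩⟩
      have hcolor : ∀ {v : V}, 0 < beC K T v → c v = false := by
        intro v hb
        have h0 : alC K T v = 0 := by
          by_contra h
          have := hmix v (by omega)
          omega
        simp [hc, h0]
      have hcolor2 : ∀ {v : V}, 0 < alC K T v → c v = true := by
        intro v ha
        simp [hc, ha]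
      apply HYP c
      · -- proper coloring
        intro x y hxy
        have he := hmemEF hxy
        rcases hendpts hxy with ⟨h1, h2⟩ | ⟨h1, h2⟩ <;> by_cases hT' : s(x,y) ∈ T
        · rw [hcolor2 (hal_pos he (Or.inl ⟨h1, hT'⟩)),
            hcolor (hbe_pos he (Or.inr ⟨h2, hT'⟩))]
          simp
        · rw [hcolor (hbe_pos he (Or.inl ⟨h1, hT'⟩)),
            hcolor2 (hal_pos he (Or.inr ⟨h2, hT'⟩))]
          simp
        · rw [hcolor (hbe_pos he (Or.inr ⟨h2, hT'⟩)),
            hcolor2 (hal_pos he (Or.inl ⟨h1, hT'⟩))]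
          simp
        · rw [hcolor2 (hal_pos he (Or.inr ⟨h2, hT'⟩)),
            hcolor (hbe_pos he (Or.inl ⟨h1, hT'⟩))]
          simp
      · -- min degree 2
        intro v p hvp
        have he0 : s(v,p) ∈ incC K v := by
          apply Finset.mem_filter.mpr
          refine ⟨hmemEF hvp, ?_⟩
          rcases hendpts hvp with ⟨h1, _⟩ | ⟨_, h2⟩
          · exact Or.inl h1
          · exact Or.inr h2
        have hcard : 1 < (incC K v).card := by
          have h1 : 0 < (incC K v).card := Finset.card_pos.mpr ⟨_, he0⟩
          have h2 := hA v
          omega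
        obtain ⟨e1, he1, e2, he2, hne12⟩ := Finset.one_lt_card.mp hcard
        have hnb : ∀ {e : Sym2 V}, e ∈ incC K v → ∃ n, e = s(v, n) ∧ K.Adj v n := by
          intro e he
          unfold incC at he
          rw [Finset.mem_filter] at he
          rcases he.2 with h | h
          · refine ⟨we e, ?_, ?_⟩
            · conv_lhs => rw [← mk_ue_we e]
              rw [h]
            · rw [← h]; exact adj_ue_we he.1
          · refine ⟨ue e, ?_, ?_⟩
            · conv_lhs => rw [← mk_ue_we e]
              rw [h]
              exact Sym2.eq_swap
            · rw [← h]; exact (adj_ue_we he.1).symm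
        obtain ⟨n1, hn1e, hn1adj⟩ := hnb he1
        obtain ⟨n2, hn2e, hn2adj⟩ := hnb he2
        have hn12 : n1 ≠ n2 := by
          intro h
          apply hne12
          rw [hn1e, hn2e, h]
        by_cases hp : n1 = p
        · exact ⟨n2, by rw [← hp]; exact hn12.symm, hn2adj⟩
        · exact ⟨n1, hp, hn1adj⟩

end Density2


lemma exists_cycle_data {V : Type} [Fintype V] (K : SimpleGraph V) (c : V → Bool)
    (hc : ∀ x y, K.Adj x y → c x ≠ c y)
    (h2 : ∀ v p, K.Adj v p → ∃ q, q ≠ p ∧ K.Adj v q)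
    (hne : K.edgeSet.Nonempty) :
    ∃ (m : ℕ) (f : ℕ → V), 4 ≤ m ∧ Even m ∧
      (∀ i j, i < m → j < m → f i = f j → i = j) ∧
      (∀ i, i < m → K.Adj (f i) (f ((i+1) % m))) := by
  classical
  -- initial edge
  obtain ⟨e, he⟩ := hne
  have hxy : K.Adj (Quot.out e).1 (Quot.out e).2 := by
    rw [← SimpleGraph.mem_edgeSet, Sym2.mk, Prod.mk.eta]
    rw [Quot.out_eq]
    exact he
  -- the sequence
  let S : ℕ → {pq : V × V // K.Adj pq.1 pq.2} := fun n =>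
    Nat.rec ⟨((Quot.out e).1, (Quot.out e).2), hxy⟩
      (fun _ prev =>
        ⟨(prev.1.2, Classical.choose (h2 prev.1.2 prev.1.1 prev.2.symm)),
          (Classical.choose_spec (h2 prev.1.2 prev.1.1 prev.2.symm)).2⟩) n
  let f : ℕ → V := fun n => (S n).1.1
  have fsucc : ∀ n, f (n + 1) = (S n).1.2 := fun n => rfl
  have adjf : ∀ n, K.Adj (f n) (f (n + 1)) := by
    intro n; rw [fsucc]; exact (S n).2
  have nb : ∀ n, f (n + 2) ≠ f n := by
    intro n
    have : f (n + 2) = Classical.choose (h2 (S n).1.2 (S n).1.1 (S n).2.symm) := rfl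
    rw [this]
    exact (Classical.choose_spec (h2 (S n).1.2 (S n).1.1 (S n).2.symm)).1
  -- parity
  have par : ∀ n, (c (f n) = c (f 0)) ↔ Even n := by
    intro n
    induction n with
    | zero => simp
    | succ n ih =>
      have hne' : c (f n) ≠ c (f (n + 1)) := hc _ _ (adjf n)
      rw [Nat.even_add_one, ← ih]
      cases hb : c (f n) <;> cases h0 : c (f 0) <;> cases hb1 : c (f (n + 1)) <;>
        simp_all
  -- collision
  have hcol : ∃ j, ∃ i, i < j ∧ f i = f j := by
    obtain ⟨x, y, hxyne, hfeq⟩ :=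
      Fintype.exists_ne_map_eq_of_card_lt (fun t : Fin (Fintype.card V + 1) => f t.val)
        (by simp)
    rcases lt_or_gt_of_ne hxyne with h | h
    · exact ⟨y.val, x.val, h, hfeq⟩
    · exact ⟨x.val, y.val, h, hfeq.symm⟩
  let j0 := Nat.find hcol
  obtain ⟨i0, hij, heq⟩ : ∃ i, i < j0 ∧ f i = f j0 := Nat.find_spec hcol
  have hinj : ∀ s t, s < t → t < j0 → f s ≠ f t := by
    intro s t hst ht hf
    exact Nat.find_min hcol ht ⟨s, hst, hf⟩
  set m := j0 - i0 with hm
  have hm1 : 1 ≤ m := by omega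
  have hm_ne1 : m ≠ 1 := by
    intro h1
    have : j0 = i0 + 1 := by omega
    exact (adjf i0).ne (by rw [← this, ← heq])
  have hm_ne2 : m ≠ 2 := by
    intro h2'
    have : j0 = i0 + 2 := by omega
    exact nb i0 (by rw [this] at heq; exact heq.symm)
  have hmeven : Even m := by
    rw [hm, Nat.even_sub (by omega)]
    have hpi := par i0
    rw [heq] at hpi
    exact (par j0).symm.trans hpi
  have hm4 : 4 ≤ m := by
    obtain ⟨r, hr⟩ := hmeven
    omega
  refine ⟨m, fun i => f (i0 + i), hm4, hmeven, ?_, ?_⟩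
  · intro i j hi hj hf
    by_contra hne'
    rcases lt_or_gt_of_ne hne' with h | h
    · exact hinj _ _ (by omega) (by omega) hf
    · exact hinj _ _ (by omega) (by omega) hf.symm
  · intro i hi
    show K.Adj (f (i0 + i)) (f (i0 + (i + 1) % m))
    by_cases hlt : i + 1 < m
    · rw [Nat.mod_eq_of_lt hlt, show i0 + (i + 1) = (i0 + i) + 1 by omega]
      exact adjf (i0 + i)
    · have hm' : i + 1 = m := by omega
      rw [hm', Nat.mod_self, Nat.add_zero]
      have hadj := adjf (j0 - 1)
      rw [show j0 - 1 + 1 = j0 by omega] at hadj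
      rw [show i0 + i = j0 - 1 by omega, heq]
      exact hadj


section
variable {V : Type}

/-- The cycle subgraph built from cyclically adjacent vertices. -/
def cycSub (G : SimpleGraph V) (g : ℕ → V) (m : ℕ) (hm : 0 < m)
    (hg : ∀ i, i < m → G.Adj (g i) (g ((i+1) % m))) : G.Subgraph where
  verts := {x | ∃ i, i < m ∧ x = g i}
  Adj x y := ∃ i, i < m ∧ ((x = g i ∧ y = g ((i+1) % m)) ∨ (y = g i ∧ x = g ((i+1) % m)))
  adj_sub := by
    rintro x y ⟨i, hi, (⟨rfl, rfl⟩ | ⟨rfl, rfl⟩)⟩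
    · exact hg i hi
    · exact (hg i hi).symm
  edge_vert := by
    rintro x y ⟨i, hi, (⟨rfl, rfl⟩ | ⟨rfl, rfl⟩)⟩
    · exact ⟨i, hi, rfl⟩
    · exact ⟨(i+1) % m, Nat.mod_lt _ hm, rfl⟩
  symm := by
    constructor
    rintro x y ⟨i, hi, h⟩
    exact ⟨i, hi, h.symm⟩

lemma fin_sub_val_one {m : ℕ} (hm : 2 ≤ m) (s t : Fin m) :
    (t - s).val = 1 ↔ t.val = (s.val + 1) % m := by
  haveI : NeZero m := ⟨by omega⟩
  have h1 : (1 : Fin m).val = 1 := by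
    rw [Fin.val_one']
    exact Nat.mod_eq_of_lt (by omega)
  constructor
  · intro h
    have : t - s = 1 := by rw [Fin.ext_iff, h, h1]
    have ht : t = s + 1 := by
      rw [sub_eq_iff_eq_add] at this
      rw [this, add_comm]
    rw [ht, Fin.val_add, h1]
  · intro h
    have ht : t = s + 1 := by
      rw [Fin.ext_iff, Fin.val_add, h1, h]
    rw [ht]
    have : s + 1 - s = 1 := add_sub_cancel_left s 1
    rw [this, h1]

lemma no_double_succ {m : ℕ} (hm : 3 ≤ m) {x y : ℕ} (hx : x < m) (hy : y < m)
    (h1 : y = (x + 1) % m) (h2 : x = (y + 1) % m) : False := by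
  by_cases hx1 : x + 1 < m
  · rw [Nat.mod_eq_of_lt hx1] at h1
    by_cases hy1 : y + 1 < m
    · rw [Nat.mod_eq_of_lt hy1] at h2; omega
    · have : y + 1 = m := by omega
      rw [this, Nat.mod_self] at h2; omega
  · have hxm : x + 1 = m := by omega
    rw [hxm, Nat.mod_self] at h1
    subst h1
    rw [Nat.mod_eq_of_lt (by omega)] at h2
    omega

lemma cycSub_iso (G : SimpleGraph V) (g : ℕ → V) (m : ℕ) (hm : 4 ≤ m)
    (hginj : ∀ i j, i < m → j < m → g i = g j → i = j)
    (hg : ∀ i, i < m → G.Adj (g i) (g ((i+1) % m))) :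
    Nonempty ((cycSub G g m (by omega) hg).coe ≃g SimpleGraph.cycleGraph m) := by
  have hbij : Function.Bijective
      (fun t : Fin m => (⟨g t.val, ⟨t.val, t.isLt, rfl⟩⟩ : (cycSub G g m (by omega) hg).verts)) := by
    constructor
    · intro s t h
      simp only [Subtype.mk.injEq] at h
      exact Fin.ext (hginj _ _ s.isLt t.isLt (congrArg Subtype.val h))
    · rintro ⟨x, i, hi, rfl⟩
      exact ⟨⟨i, hi⟩, rfl⟩
  let e := Equiv.ofBijective _ hbij
  refine ⟨⟨e.symm, ?_⟩⟩
  have key : ∀ s t : Fin m,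
      (cycSub G g m (by omega) hg).coe.Adj (e s) (e t) ↔ (SimpleGraph.cycleGraph m).Adj s t := by
    intro s t
    rw [SimpleGraph.cycleGraph_adj']
    rw [fin_sub_val_one (by omega), fin_sub_val_one (by omega)]
    constructor
    · rintro ⟨i, hi, (⟨h1, h2⟩ | ⟨h1, h2⟩)⟩
      · right
        have hs : s.val = i := hginj _ _ s.isLt hi h1
        have ht : t.val = (i+1) % m := hginj _ _ t.isLt (Nat.mod_lt _ (by omega)) h2
        rw [ht, hs]
      · left
        have hs : t.val = i := hginj _ _ t.isLt hi h1
        have ht : s.val = (i+1) % m := hginj _ _ s.isLt (Nat.mod_lt _ (by omega)) h2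
        rw [ht, hs]
    · rintro (h | h)
      · refine ⟨t.val, t.isLt, Or.inr ⟨rfl, ?_⟩⟩
        show g s.val = g ((t.val + 1) % m)
        rw [h]
      · refine ⟨s.val, s.isLt, Or.inl ⟨rfl, ?_⟩⟩
        show g t.val = g ((s.val + 1) % m)
        rw [h]
  intro s t
  show (SimpleGraph.cycleGraph m).Adj (e.symm s) (e.symm t) ↔ _
  rw [← key (e.symm s) (e.symm t), e.apply_symm_apply, e.apply_symm_apply]

lemma cycle_le_ncard (G : SimpleGraph V) (G' : G.Subgraph) [Finite V] (g : ℕ → V) (m : ℕ)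
    (hm : 4 ≤ m)
    (hginj : ∀ i j, i < m → j < m → g i = g j → i = j)
    (hg : ∀ i, i < m → G'.Adj (g i) (g ((i+1) % m))) :
    m ≤ G'.edgeSet.ncard := by
  have hfin : G'.edgeSet.Finite := Set.toFinite _
  rw [← Nat.card_coe_set_eq]
  have : ∀ t : Fin m, s(g t.val, g ((t.val + 1) % m)) ∈ G'.edgeSet := by
    intro t
    rw [SimpleGraph.Subgraph.mem_edgeSet]
    exact hg t.val t.isLt
  have hinj : Function.Injective
      (fun t : Fin m => (⟨s(g t.val, g ((t.val + 1) % m)), this t⟩ : G'.edgeSet)) := by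
    intro s t h
    simp only [Subtype.mk.injEq, Sym2.eq_iff] at h
    rcases h with ⟨h1, h2⟩ | ⟨h1, h2⟩
    · exact Fin.ext (hginj _ _ s.isLt t.isLt h1)
    · have hs : s.val = (t.val + 1) % m := hginj _ _ s.isLt (Nat.mod_lt _ (by omega)) h1
      have ht : t.val = (s.val + 1) % m := hginj _ _ t.isLt (Nat.mod_lt _ (by omega)) h2.symm
      exact absurd (no_double_succ (show 3 ≤ m by omega) t.isLt s.isLt hs ht) (fun h => h)
  calc m = Nat.card (Fin m) := by simp
  _ ≤ _ := Nat.card_le_card_of_injective _ hinj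

end


/-- If `D` is a deck and `k` an even integer such that no graph in `D` contains
an even cycle of length at most `k`, then there is a nonzero kernel `U` with
`c^D_{U,2} = c^D_{U,4} = ⋯ = c^D_{U,k} = 0`. -/
theorem core_III (l : ℕ) (D : Multiset FinGraph) (hD : IsDeck D l) (k : ℕ) (hk : Even k)
    (hno : ∀ j : ℕ, Even j → 4 ≤ j → j ≤ k → sD D (cycleF j) = 0) :
    ∃ U : Kernel, U.Nonzero ∧ AllCoeffZero D U k := by
  classical
  refine ⟨myU, myU_nonzero, ?_⟩
  intro k' hk'even hk'pos hk'le
  unfold coeff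
  apply Multiset.sum_eq_zero
  intro r hr
  rw [Multiset.mem_map] at hr
  obtain ⟨H, hH, rfl⟩ := hr
  unfold subDeck at hH
  rw [Multiset.mem_bind] at hH
  obtain ⟨G, hGD, hHG⟩ := hH
  unfold FinGraph.subs at hHG
  rw [Multiset.mem_map] at hHG
  obtain ⟨G', hG'mem, rfl⟩ := hHG
  have hG'card : G'.edgeSet.ncard = k' := by
    rw [Finset.mem_val, Set.Finite.mem_toFinset] at hG'mem
    exact hG'mem
  -- the coe graph has an edge
  have hpos : 0 < G'.edgeSet.ncard := by omega
  have hne' : G'.edgeSet.Nonempty := (Set.ncard_pos (Set.toFinite _)).mp hpos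
  obtain ⟨e, he⟩ := hne'
  have hadj0 : G'.Adj (Quot.out e).1 (Quot.out e).2 := by
    rw [← SimpleGraph.Subgraph.mem_edgeSet, Sym2.mk, Prod.mk.eta, Quot.out_eq]
    exact he
  have hcoe_ne : G'.coe.edgeSet.Nonempty := by
    refine ⟨s(⟨(Quot.out e).1, G'.edge_vert hadj0⟩, ⟨(Quot.out e).2, G'.edge_vert hadj0.symm⟩),
      ?_⟩
    rw [SimpleGraph.mem_edgeSet]
    exact hadj0
  show FinGraph.density (FinGraph.of G'.coe) myU = 0
  apply homDensity_zero
  · exact hcoe_ne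
  · intro c hc h2
    obtain ⟨m, f, hm4, hmE, hinj, hadjc⟩ := exists_cycle_data G'.coe c hc h2 hcoe_ne
    set g : ℕ → G.V := fun i => ((f i : G'.verts) : G.V) with hg
    have hginj : ∀ i j, i < m → j < m → g i = g j → i = j := by
      intro i j hi hj hgij
      exact hinj i j hi hj (Subtype.coe_injective hgij)
    have hgadj' : ∀ i, i < m → G'.Adj (g i) (g ((i+1) % m)) := by
      intro i hi
      exact hadjc i hi
    have hgadjG : ∀ i, i < m → G.G.Adj (g i) (g ((i+1) % m)) := fun i hi =>
      (hgadj' i hi).adj_sub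
    have hmle : m ≤ k' := by
      rw [← hG'card]
      exact cycle_le_ncard G.G G' g m hm4 hginj hgadj'
    have hsD := hno m hmE (by omega) (le_trans hmle hk'le)
    unfold sD at hsD
    have hzero : Set.ncard {G'' : G.G.Subgraph | Nonempty (G''.coe ≃g (cycleF m).G)} = 0 :=
      (Multiset.sum_eq_zero_iff.mp hsD) _ (Multiset.mem_map.mpr ⟨G, hGD, rfl⟩)
    have hnonempty :
        {G'' : G.G.Subgraph | Nonempty (G''.coe ≃g (cycleF m).G)}.Nonempty :=
      ⟨cycSub G.G g m (by omega) hgadjG, cycSub_iso G.G g m hm4 hginj hgadjG⟩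
    rw [Set.ncard_eq_zero (Set.toFinite _)] at hzero
    exact absurd hzero (Set.nonempty_iff_ne_empty.mp hnonempty)
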